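/- arXiv:1403.0800 — 8 statements merged into one kernel-verified Lean document; each statement's English description precedes it below -/
import Mathlib

section
/- Let T, P, A be strings over an alphabet such that P·A is an infix of T and there is no branching between P and P·A in T. Then exactly one of the following two statements holds: (1) the rightmost occurrence position of P in T equals the rightmost occurrence position of P·A in T; (2) there exists a string B with |B| < |A| such that P·B is a suffix of T. -/
/-- `S` occurs at position `i` in `T`. -/
def OccursAt {α : Type*} (S T : List α) (i : ℕ) : Prop :=
  i + S.length ≤ T.length ∧ S <+: T.drop i

/-- `S` is an infix (substring) of `T`: it occurs at some position. -/
def IsInfixOf {α : Type*} (S T : List α) : Prop :=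
  ∃ i, OccursAt S T i

/-- `S` is a suffix of `T`: it occurs at position `|T| - |S|`. -/
def IsSuffixOf {α : Type*} (S T : List α) : Prop :=
  OccursAt S T (T.length - S.length)

/-- The rightmost occurrence position of `S` in `T`. -/
noncomputable def rightmost {α : Type*} (S T : List α) : ℕ :=
  sSup {i | OccursAt S T i}

/-- There is no branching between `P` and `P ++ A` in `T`. -/
def NoBranching {α : Type*} (T P A : List α) : Prop :=
  IsInfixOf (P ++ A) T ∧
    ∀ k ≤ A.length, ∀ C C' : List α, C.length = k → C'.length = k →
      IsInfixOf (P ++ C) T → IsInfixOf (P ++ C') T → C = C'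

/-- Lemma 1: exactly one of the two cases holds. -/
theorem most_recent_match_cases {α : Type*} (T P A : List α)
    (h : NoBranching T P A) :
    Xor' (rightmost P T = rightmost (P ++ A) T)
      (∃ B : List α, B.length < A.length ∧ IsSuffixOf (P ++ B) T) := by
  obtain ⟨hinf, hnb⟩ := h
  obtain ⟨i0, hi0⟩ := hinf
  have hPi0 : OccursAt P T i0 := by
    refine ⟨?_, (List.prefix_append P A).trans hi0.2⟩
    have := hi0.1
    simp only [List.length_append] at this
    omega
  have hbddP : BddAbove {i | OccursAt P T i} :=
    ⟨T.length, fun i hi => le_trans (Nat.le_add_right i P.length) hi.1⟩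
  have hbddPA : BddAbove {i | OccursAt (P ++ A) T i} :=
    ⟨T.length, fun i hi => le_trans (Nat.le_add_right _ _) hi.1⟩
  have hsub : ∀ i, OccursAt (P ++ A) T i → OccursAt P T i := by
    intro i hi
    refine ⟨?_, (List.prefix_append P A).trans hi.2⟩
    have := hi.1
    simp only [List.length_append] at this
    omega
  have hj : OccursAt P T (rightmost P T) := Nat.sSup_mem ⟨i0, by exact hPi0⟩ hbddP
  set j := rightmost P T with hjdef
  obtain ⟨rest, hrest⟩ := hj.2
  have hlen : P.length + rest.length = T.length - j := by
    have := congrArg List.length hrest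
    simpa [List.length_append] using this
  have hjle : j + P.length ≤ T.length := hj.1
  set m := min A.length rest.length with hm
  set C := rest.take m with hC
  have hClen : C.length = m := by
    rw [hC, List.length_take]; omega
  have occC : OccursAt (P ++ C) T j := by
    refine ⟨?_, ⟨rest.drop m, ?_⟩⟩
    · simp only [List.length_append, hClen]
      omega
    · rw [List.append_assoc, List.take_append_drop]; exact hrest
  rcases le_or_gt A.length rest.length with hcase | hcase
  · -- m = A.length : rightmost positions coincide
    have hmA : m = A.length := min_eq_left hcase
    have hCA : C = A :=
      hnb A.length le_rfl C A (by rw [hClen, hmA]) rfl ⟨j, occC⟩ ⟨i0, hi0⟩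
    have occA : OccursAt (P ++ A) T j := hCA ▸ occC
    left
    constructor
    · have h1 : rightmost (P ++ A) T ≤ j :=
        csSup_le ⟨j, occA⟩ fun i hi => le_csSup hbddP (hsub i hi)
      have h2 : j ≤ rightmost (P ++ A) T := le_csSup hbddPA occA
      omega
    · rintro ⟨B, hB, hsuf⟩
      have hocc : OccursAt P T (T.length - (P ++ B).length) := by
        refine ⟨?_, (List.prefix_append P B).trans hsuf.2⟩
        have := hsuf.1
        simp only [List.length_append] at this ⊢
        omega
      have hle : T.length - (P ++ B).length ≤ j := le_csSup hbddP hocc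
      have h1 := hsuf.1
      have h2 := occA.1
      simp only [List.length_append] at h1 h2 hle
      omega
  · -- m = rest.length : P ++ rest is a proper suffix
    have hmr : m = rest.length := min_eq_right hcase.le
    right
    constructor
    · refine ⟨C, by rw [hClen, hmr]; exact hcase, ?_⟩
      have hpos : T.length - (P ++ C).length = j := by
        simp only [List.length_append, hClen]
        omega
      rw [IsSuffixOf, hpos]
      exact occC
    · intro heq
      have hrA : OccursAt (P ++ A) T (rightmost (P ++ A) T) :=
        Nat.sSup_mem ⟨i0, by exact hi0⟩ hbddPA
      have h1 := hrA.1
      rw [← heq] at h1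
      simp only [List.length_append] at h1
      omega
end

section
/- Let T be a string, a a character, and S a string. If S occurs at position i in T ++ [a] but S does not occur at position i in T, then i + |S| = |T| + 1; in particular, S is a suffix of T ++ [a]. -/
lemma prefix_of_concat {α} {S L : List α} {a : α} (h : S <+: L ++ [a])
    (hl : S.length ≤ L.length) : S <+: L := by
  have h1 : S = (L ++ [a]).take S.length := List.prefix_iff_eq_take.mp h
  rw [List.take_append_of_le_length hl] at h1
  rw [h1]; exact List.take_prefix _ _

/-- A new occurrence created by appending one character must be a suffix of the
extended string. -/
theorem new_occurrence_is_suffix {α : Type*} (T : List α) (a : α) (S : List α)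
    (i : ℕ) (h₁ : OccursAt S (T ++ [a]) i) (h₂ : ¬ OccursAt S T i) :
    i + S.length = T.length + 1 ∧ IsSuffixOf S (T ++ [a]) := by
  obtain ⟨hle, hpre⟩ := h₁
  simp only [List.length_append, List.length_singleton] at hle
  have heq : i + S.length = T.length + 1 := by
    by_contra h
    have hle' : i + S.length ≤ T.length := by omega
    apply h₂
    refine ⟨hle', ?_⟩
    rw [List.drop_append_of_le_length (by omega)] at hpre
    exact prefix_of_concat hpre (by simp [List.length_drop]; omega)
  refine ⟨heq, ?_⟩
  have : (T ++ [a]).length - S.length = i := by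
    simp only [List.length_append, List.length_singleton]; omega
  rw [IsSuffixOf, this]
  exact ⟨by simp; omega, hpre⟩
end

section
/- Let T, X, R be strings over an alphabet such that there is no branching between X and X·R in T. Then for every string B and every position i, the string B·X·R occurs at position i in T if and only if B·X occurs at position i in T and i + |B| + |X| + |R| ≤ |T|. -/
/-- If there is no branching between X and X·R in T, then any occurrence of B·X
that has room to extend is an occurrence of B·X·R. -/
theorem occurs_append_iff_of_noBranching {α : Type*} (T X R : List α)
    (h : NoBranching T X R) :
    ∀ (B : List α) (i : ℕ),
      OccursAt (B ++ X ++ R) T i ↔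
        OccursAt (B ++ X) T i ∧ i + B.length + X.length + R.length ≤ T.length := by
  intro B i
  constructor
  · rintro ⟨hlen, hpre⟩
    have hlen' : i + (B.length + X.length + R.length) ≤ T.length := by
      simpa [List.length_append, Nat.add_assoc] using hlen
    refine ⟨⟨?_, ?_⟩, by omega⟩
    · simp only [List.length_append] at *; omega
    · exact (List.prefix_append (B ++ X) R).trans hpre
  · rintro ⟨⟨hlen, hpre⟩, hroom⟩
    obtain ⟨s, hs⟩ := hpre
    have hslen : s.length = T.length - i - B.length - X.length := by
      have := congrArg List.length hs
      simp [List.length_append] at this ⊢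
      omega
    set C := s.take R.length with hC
    have hClen : C.length = R.length := by
      simp [hC, hslen]
      omega
    -- T.drop (i + B.length) = X ++ s
    have hdrop : T.drop (i + B.length) = X ++ s := by
      rw [← List.drop_drop, ← hs, List.append_assoc, List.drop_left]
    have hXC : OccursAt (X ++ C) T (i + B.length) := by
      constructor
      · simp [List.length_append, hClen]; omega
      · rw [hdrop]
        exact (List.prefix_append_right_inj X).mpr (List.take_prefix _ _)
    have hCR : C = R := h.2 R.length le_rfl C R hClen rfl ⟨_, hXC⟩ h.1
    refine ⟨?_, ?_⟩
    · simp [List.length_append]; omega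
    · rw [← hs, ← hCR]
      exact (List.prefix_append_right_inj (B ++ X)).mpr (List.take_prefix _ _)
end

section
/- Let T, P, A be strings over an alphabet such that there is no branching between P and P·A in T, and suppose there is no string B with |B| < |A| such that P·B is a suffix of T. Then for every position i at which P occurs in T, we have i + |P| + |A| ≤ |T| and P·A occurs at position i in T. Consequently, the rightmost occurrence position of P in T equals the rightmost occurrence position of P·A in T. -/
/-- Case 1 of Lemma 1: without an intervening implicit suffix, every occurrence
of P extends to an occurrence of P·A, and the rightmost positions coincide. -/
theorem rightmost_eq_of_no_short_suffix {α : Type*} (T P A : List α)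
    (h : NoBranching T P A)
    (hno : ¬ ∃ B : List α, B.length < A.length ∧ IsSuffixOf (P ++ B) T) :
    (∀ i, OccursAt P T i →
        i + P.length + A.length ≤ T.length ∧ OccursAt (P ++ A) T i) ∧
      rightmost P T = rightmost (P ++ A) T := by
  have key : ∀ i, OccursAt P T i →
      i + P.length + A.length ≤ T.length ∧ OccursAt (P ++ A) T i := by
    intro i ⟨hlen, hp⟩
    obtain ⟨t, ht⟩ := hp
    have htlen : t.length = T.length - i - P.length := by
      have := congrArg List.length ht
      simp [List.length_drop] at this
      omega
    have hi : i ≤ T.length := by omega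
    -- first, the length bound
    have hbound : i + P.length + A.length ≤ T.length := by
      by_contra hc
      apply hno
      refine ⟨t, by omega, ?_⟩
      have hPt : (P ++ t).length = T.length - i := by
        simp [htlen]; omega
      unfold IsSuffixOf OccursAt
      rw [hPt]
      have : T.length - (T.length - i) = i := by omega
      rw [this]
      exact ⟨by omega, ⟨[], by simp [ht]⟩⟩
    -- now extend: C := t.take A.length
    have htA : A.length ≤ t.length := by omega
    have hCocc : IsInfixOf (P ++ t.take A.length) T := by
      refine ⟨i, ⟨by simp [Nat.min_eq_left htA]; omega, ?_⟩⟩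
      rw [← ht]
      exact ⟨t.drop A.length, by rw [List.append_assoc, List.take_append_drop]⟩
    have hCA : t.take A.length = A :=
      h.2 A.length le_rfl _ A (by simp [Nat.min_eq_left htA]) rfl hCocc h.1
    refine ⟨hbound, ⟨by simp; omega, ?_⟩⟩
    rw [← ht, ← hCA]
    exact ⟨t.drop A.length, by rw [List.append_assoc, List.take_append_drop]⟩
  refine ⟨key, ?_⟩
  have hset : {i | OccursAt P T i} = {i | OccursAt (P ++ A) T i} := by
    ext i
    constructor
    · intro hi; exact (key i hi).2
    · intro ⟨hl, hp⟩
      refine ⟨by simp at hl; omega, (List.prefix_append P A).trans hp⟩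
  unfold rightmost
  rw [hset]
end

section
/- Let T, P, A, B be strings over an alphabet such that there is no branching between P and P·A in T, P·B is a suffix of T, and |B| < |A|. Then B equals the length-|B| prefix of A (i.e., B is a prefix of A). -/
/-- Case 2 of Lemma 1: the implicit suffix P·B lies on the same edge,
i.e. B is a prefix of A. -/
theorem short_suffix_is_prefix {α : Type*} (T P A B : List α)
    (h : NoBranching T P A) (hB : IsSuffixOf (P ++ B) T)
    (hlen : B.length < A.length) :
    B = A.take B.length := by
  obtain ⟨⟨i, hi, hpre⟩, hnb⟩ := h
  apply hnb B.length (le_of_lt hlen) B (A.take B.length) rfl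
    (List.length_take_of_le (le_of_lt hlen))
  · exact ⟨_, hB⟩
  · refine ⟨i, ?_, ?_⟩
    · have : (P ++ A.take B.length).length ≤ (P ++ A).length := by
        simp [List.length_take_of_le (le_of_lt hlen)]
        omega
      omega
    · calc P ++ A.take B.length <+: P ++ A := by
            exact ⟨A.drop B.length, by simp⟩
          _ <+: T.drop i := hpre
end

section
/- Let T be a string, a a character, and S a string that is an infix of T. If S is a suffix of T ++ [a], then the rightmost occurrence position of S in T ++ [a] equals |T| + 1 − |S|; otherwise, the rightmost occurrence position of S in T ++ [a] equals the rightmost occurrence position of S in T. -/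
lemma drop_append_single {α : Type*} (T : List α) (a : α) (i : ℕ) (h : i ≤ T.length) :
    (T ++ [a]).drop i = T.drop i ++ [a] := by
  rw [List.drop_append]
  have : i - T.length = 0 := by omega
  simp [this]

lemma occursAt_snoc_iff {α : Type*} (T : List α) (a : α) (S : List α) (i : ℕ)
    (hlt : i + S.length ≤ T.length) :
    OccursAt S (T ++ [a]) i ↔ OccursAt S T i := by
  constructor
  · rintro ⟨h1, h2⟩
    refine ⟨hlt, ?_⟩
    rw [drop_append_single T a i (by omega)] at h2
    have hlen : S.length ≤ (T.drop i).length := by simp; omega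
    have heq := List.prefix_iff_eq_take.mp h2
    rw [List.take_append, Nat.sub_eq_zero_of_le hlen,
      List.take_zero, List.append_nil] at heq
    rw [heq]
    exact List.take_prefix _ _
  · rintro ⟨h1, h2⟩
    refine ⟨by simp; omega, ?_⟩
    rw [drop_append_single T a i (by omega)]
    exact h2.trans ⟨[a], rfl⟩

/-- Correctness of naive position updating: appending a character changes the
rightmost occurrence position exactly for suffixes of the extended text. -/
theorem rightmost_snoc {α : Type*} (T : List α) (a : α) (S : List α)
    (hS : IsInfixOf S T) :
    (IsSuffixOf S (T ++ [a]) →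
        rightmost S (T ++ [a]) = T.length + 1 - S.length) ∧
      (¬ IsSuffixOf S (T ++ [a]) →
        rightmost S (T ++ [a]) = rightmost S T) := by
  obtain ⟨j, hj1, hj2⟩ := hS
  constructor
  · intro hsuf
    have hm : OccursAt S (T ++ [a]) (T.length + 1 - S.length) := by
      simpa [IsSuffixOf] using hsuf
    have ub : ∀ i ∈ {i | OccursAt S (T ++ [a]) i}, i ≤ T.length + 1 - S.length := by
      rintro i ⟨h1, -⟩
      simp at h1
      omega
    exact le_antisymm (csSup_le ⟨_, hm⟩ ub) (le_csSup ⟨_, ub⟩ hm)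
  · intro hnsuf
    have hset : {i | OccursAt S (T ++ [a]) i} = {i | OccursAt S T i} := by
      ext i
      constructor
      · intro h
        rcases Nat.lt_or_ge (i + S.length) (T.length + 1) with hlt | hge
        · exact (occursAt_snoc_iff T a S i (by omega)).mp h
        · exfalso
          apply hnsuf
          have h1 := h.1
          simp at h1
          have : i = (T ++ [a]).length - S.length := by simp; omega
          rw [this] at h
          exact h
      · intro h
        exact (occursAt_snoc_iff T a S i h.1).mpr h
    unfold rightmost
    rw [hset]
end

section
/- Let T and S be strings over an alphabet such that S is a suffix of T and S occurs in T at some position strictly less than |T| − |S|. Then every suffix S' of S is a suffix of T and occurs in T at some position strictly less than |T| − |S'|. -/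
lemma isSuffixOf_iff_suffix {α : Type*} (S T : List α) : IsSuffixOf S T ↔ S <:+ T := by
  constructor
  · rintro ⟨h1, h2⟩
    have hle : S.length ≤ T.length := by omega
    have hlen : S.length = (T.drop (T.length - S.length)).length := by
      simp [List.length_drop]; omega
    rw [h2.eq_of_length hlen]
    exact List.drop_suffix _ _
  · rintro ⟨U, rfl⟩
    have hU : (U ++ S).length - S.length = U.length := by simp
    constructor
    · simp
    · rw [hU, List.drop_left]

/-- Suffixes shorter than an active suffix are themselves active. -/
theorem active_suffix_closed_under_suffix {α : Type*} (T S : List α)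
    (hS : IsSuffixOf S T) (hact : ∃ i < T.length - S.length, OccursAt S T i) :
    ∀ S' : List α, IsSuffixOf S' S →
      IsSuffixOf S' T ∧ ∃ j < T.length - S'.length, OccursAt S' T j := by
  intro S' hS'
  have hTsfx : S <:+ T := (isSuffixOf_iff_suffix S T).mp hS
  have hS'S : S' <:+ S := (isSuffixOf_iff_suffix S' S).mp hS'
  obtain ⟨U, hU⟩ := hS'S
  obtain ⟨i, hi, h1, h2⟩ := hact
  have hSsfx := hTsfx
  obtain ⟨V, hV⟩ := hTsfx
  have hlen : S.length ≤ T.length := by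
    rw [← hV]; simp
  have hlenS : U.length + S'.length = S.length := by rw [← hU]; simp
  refine ⟨(isSuffixOf_iff_suffix S' T).mpr (((isSuffixOf_iff_suffix S' S).mp hS').trans hSsfx), i + U.length, by omega, by omega, ?_⟩
  obtain ⟨R, hR⟩ := h2
  have hdrop : T.drop (i + U.length) = S' ++ R := by
    rw [← List.drop_drop, ← hR, ← hU, List.append_assoc, List.drop_left]
  rw [hdrop]
  exact ⟨R, rfl⟩
end

section
/- Let k be a positive natural number and m : Fin k → ℕ a family of natural numbers with total sum n. Write q = n / k (integer division) and r = n % k. Then the sum over i of (m i)² is at least (k − r)·q² + r·(q + 1)². Consequently, the number n² − Σᵢ (m i)² of ordered pairs of items lying in different parts of a partition of n items into k parts of sizes m i is maximized when the part sizes are as equal as possible (all equal to q or q + 1). -/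
lemma int_mul_pred_nonneg (a : ℤ) : 0 ≤ a * (a - 1) := by
  rcases le_or_gt 1 a with h | h
  · nlinarith
  · nlinarith

/-- The sum of squares of part sizes is minimized (so the number of cross pairs
is maximized) when the parts are as equal as possible. -/
theorem sum_sq_ge_balanced (k : ℕ) (hk : 0 < k) (m : Fin k → ℕ) (n : ℕ)
    (hn : ∑ i, m i = n) :
    (k - n % k) * (n / k) ^ 2 + (n % k) * (n / k + 1) ^ 2 ≤ ∑ i, (m i) ^ 2 ∧
      n ^ 2 - ∑ i, (m i) ^ 2 ≤
        n ^ 2 - ((k - n % k) * (n / k) ^ 2 + (n % k) * (n / k + 1) ^ 2) := by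
  have hrk : n % k ≤ k := (Nat.mod_lt n hk).le
  have key : (k - n % k) * (n / k) ^ 2 + (n % k) * (n / k + 1) ^ 2 ≤ ∑ i, (m i) ^ 2 := by
    set q : ℤ := ((n / k : ℕ) : ℤ)
    set r : ℤ := ((n % k : ℕ) : ℤ)
    have hnq : (k : ℤ) * q + r = (n : ℤ) := by
      have := Nat.div_add_mod n k
      push_cast [q, r]
      push_cast at this ⊢
      linarith [this]
    have h1 : ∀ i : Fin k, q ^ 2 + (2 * q + 1) * ((m i : ℤ) - q) ≤ (m i : ℤ) ^ 2 := by
      intro i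
      have := int_mul_pred_nonneg ((m i : ℤ) - q)
      nlinarith
    have hsum : (k : ℤ) * q ^ 2 + (2 * q + 1) * ((n : ℤ) - k * q) ≤ ∑ i, (m i : ℤ) ^ 2 := by
      have := Finset.sum_le_sum (s := Finset.univ) (fun i _ => h1 i)
      have hsm : (∑ i, ((m i : ℤ))) = (n : ℤ) := by exact_mod_cast congrArg (Nat.cast : ℕ → ℤ) hn
      simp only [Finset.sum_add_distrib, Finset.sum_const, Finset.card_univ, Fintype.card_fin,
        nsmul_eq_mul, ← Finset.mul_sum, Finset.sum_sub_distrib] at this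
      rw [hsm] at this
      linarith
    have hfin : (((k - n % k) * (n / k) ^ 2 + (n % k) * (n / k + 1) ^ 2 : ℕ) : ℤ)
        ≤ ((∑ i, (m i) ^ 2 : ℕ) : ℤ) := by
      have h2 : ((k : ℤ) - r) * q ^ 2 + r * (q + 1) ^ 2 ≤ ∑ i, (m i : ℤ) ^ 2 := by
        nlinarith [hsum, hnq]
      push_cast [Nat.cast_sub hrk]
      convert h2 using 2 <;> push_cast [q, r] <;> ring
    exact_mod_cast hfin
  exact ⟨key, Nat.sub_le_sub_left key _⟩
end
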